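/- Let k, m, n be nonnegative integers with m even, k+m ≤ n, let Z be an n×(k+m) matrix with positive maximal minors and C a k×n matrix with positive maximal minors, and Y = CZ. Then for any list I = (i_1, i_1+1, ..., i_{m/2−1}, i_{m/2−1}+1) of m−2 strictly increasing integers in [2, n−1], we have (−1)^{k+1} ⟨Y, I, n, 1⟩ > 0. -/

import Mathlib

open Matrix Finset Equiv

section Aux
variable {R : Type*} [CommRing R]


instance instDecSM {p n : ℕ} : DecidablePred (StrictMono : (Fin p → Fin n) → Prop) :=
  fun f => decidable_of_iff (∀ a b : Fin p, a < b → f a < f b)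
    ⟨fun h {a b} hab => h a b hab, fun h a b hab => h hab⟩

theorem det_mul_expand {p n : ℕ} (A : Matrix (Fin p) (Fin n) R) (B : Matrix (Fin n) (Fin p) R) :
    (A * B).det = ∑ f : Fin p → Fin n, (∏ i, B (f i) i) * (A.submatrix id f).det := by
  have h1 : (A * B).det
      = ∑ f : Fin p → Fin n, ∑ σ : Equiv.Perm (Fin p),
          ((Equiv.Perm.sign σ : ℤ) : R) * ∏ i, A (σ i) (f i) * B (f i) i := by
    simp only [det_apply', mul_apply, prod_univ_sum, mul_sum, Fintype.piFinset_univ]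
    rw [Finset.sum_comm]
  rw [h1]
  refine Finset.sum_congr rfl fun f _ => ?_
  rw [det_apply', Finset.mul_sum]
  refine Finset.sum_congr rfl fun σ _ => ?_
  simp only [Finset.prod_mul_distrib, submatrix_apply, id_eq]
  ring

theorem cauchyBinet {p n : ℕ} (A : Matrix (Fin p) (Fin n) R) (B : Matrix (Fin n) (Fin p) R) :
    (A * B).det = ∑ g ∈ Finset.univ.filter (StrictMono : (Fin p → Fin n) → Prop),
      (A.submatrix id g).det * (B.submatrix g id).det := by
  classical
  rw [det_mul_expand]
  have hzero : ∀ f : Fin p → Fin n, ¬ Function.Injective f →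
      (∏ i, B (f i) i) * (A.submatrix id f).det = 0 := by
    intro f hf
    obtain ⟨i, j, hfij, hij⟩ := Function.not_injective_iff.mp hf
    rw [det_zero_of_column_eq hij (fun x => by simp [submatrix_apply, hfij]), mul_zero]
  rw [← Finset.sum_filter_add_sum_filter_not Finset.univ (fun f => Function.Injective f)]
  rw [Finset.sum_eq_zero (fun f hf => hzero f (Finset.mem_filter.mp hf).2), add_zero]
  have key : ∑ f ∈ Finset.univ.filter (fun f : Fin p → Fin n => Function.Injective f),
      (∏ i, B (f i) i) * (A.submatrix id f).det
      = ∑ x ∈ (Finset.univ.filter (StrictMono : (Fin p → Fin n) → Prop)) ×ˢ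
          (Finset.univ : Finset (Equiv.Perm (Fin p))),
        (∏ i, B (x.1 (x.2 i)) i) * (A.submatrix id (x.1 ∘ x.2)).det := by
    apply Finset.sum_nbij' (i := fun f => (f ∘ Tuple.sort f, (Tuple.sort f)⁻¹))
      (j := fun x => x.1 ∘ x.2)
    · -- maps into product set
      intro f hf
      have hinj : Function.Injective f := (Finset.mem_filter.mp hf).2
      refine Finset.mem_product.mpr ⟨Finset.mem_filter.mpr ⟨Finset.mem_univ _, ?_⟩,
        Finset.mem_univ _⟩
      exact (Tuple.monotone_sort f).strictMono_of_injective
        (hinj.comp (Tuple.sort f).injective)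
    · intro x hx
      obtain ⟨h1, _⟩ := Finset.mem_product.mp hx
      have hsm : StrictMono x.1 := (Finset.mem_filter.mp h1).2
      exact Finset.mem_filter.mpr ⟨Finset.mem_univ _, hsm.injective.comp x.2.injective⟩
    · -- left inverse
      intro f hf
      show (f ∘ Tuple.sort f) ∘ ⇑(Tuple.sort f)⁻¹ = f
      rw [Function.comp_assoc]
      rw [show ⇑(Tuple.sort f) ∘ ⇑(Tuple.sort f)⁻¹ = id from funext fun x => by simp]
      exact Function.comp_id f
    · -- right inverse
      intro x hx
      obtain ⟨h1, _⟩ := Finset.mem_product.mp hx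
      have hsm : StrictMono x.1 := (Finset.mem_filter.mp h1).2
      have h2 : (x.1 ∘ x.2) ∘ (Tuple.sort (x.1 ∘ x.2)) = x.1 := by
        rw [Tuple.comp_perm_comp_sort_eq_comp_sort]
        rw [Tuple.sort_eq_refl_iff_monotone.mpr hsm.monotone]
        rfl
      have h3 : Tuple.sort (x.1 ∘ x.2) = x.2⁻¹ := by
        apply Equiv.ext; intro y
        have h5 := congrFun h2 y
        simp only [Function.comp_apply] at h5
        have h6 := hsm.injective h5
        apply x.2.injective
        simp [h6]
      have h4 : (x.1 ∘ x.2) ∘ (Tuple.sort (x.1 ∘ x.2)) = x.1 := h2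
      refine Prod.ext h4 ?_
      rw [h3, inv_inv]
    · intro f hf
      have : (f ∘ Tuple.sort f) ∘ ⇑(Tuple.sort f)⁻¹ = f := by
        rw [Function.comp_assoc]
        rw [show ⇑(Tuple.sort f) ∘ ⇑(Tuple.sort f)⁻¹ = id from funext fun x => by simp]
        exact Function.comp_id f
      simp only []
      rw [this]
      congr 1
      refine Finset.prod_congr rfl fun i _ => ?_
      simp
  rw [key, Finset.sum_product]
  refine Finset.sum_congr rfl fun g hg => ?_
  have hAg : ∀ σ : Equiv.Perm (Fin p), (A.submatrix id (g ∘ σ)).det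
      = ((Equiv.Perm.sign σ : ℤ) : R) * (A.submatrix id g).det := by
    intro σ
    rw [show A.submatrix id (g ∘ ⇑σ) = (A.submatrix id g).submatrix id ⇑σ by
      rw [submatrix_submatrix]; rfl]
    exact det_permute' σ _
  calc ∑ σ : Equiv.Perm (Fin p), (∏ i, B (g (σ i)) i) * (A.submatrix id (g ∘ σ)).det
      = (A.submatrix id g).det * ∑ σ : Equiv.Perm (Fin p),
          ((Equiv.Perm.sign σ : ℤ) : R) * ∏ i, (B.submatrix g id) (σ i) i := by
        rw [Finset.mul_sum]
        refine Finset.sum_congr rfl fun σ _ => ?_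
        rw [hAg]
        simp only [submatrix_apply, id_eq]
        ring
    _ = (A.submatrix id g).det * (B.submatrix g id).det := by rw [← det_apply']

end Aux

theorem neg_one_pow_congr_mod {M : Type*} [Monoid M] [HasDistribNeg M] {a b : ℕ}
    (h : a % 2 = b % 2) : (-1 : M) ^ a = (-1) ^ b := by
  conv_lhs => rw [← Nat.div_add_mod a 2]
  conv_rhs => rw [← Nat.div_add_mod b 2]
  rw [pow_add, pow_add, pow_mul, pow_mul, neg_one_sq, one_pow, one_pow, h]

theorem sign_shuffle (s : ℕ) : ∀ (k : ℕ) (π : Equiv.Perm (Fin (k + s)))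
    (q : Fin s → Fin (k + s)), StrictMono q →
    (∀ b : Fin s, π (Fin.natAdd k b) = q b) →
    StrictMono (fun a : Fin k => π (Fin.castAdd s a)) →
    Equiv.Perm.sign π = (-1) ^ (∑ b : Fin s, ((q b : ℕ) + k + (b : ℕ))) := by
  induction s with
  | zero =>
    intro k π q _ _ hmono
    have hsm : StrictMono ⇑π := by
      intro a b hab
      have ha : a = Fin.castAdd 0 ⟨a.1, a.2⟩ := by apply Fin.ext; rfl
      have hb : b = Fin.castAdd 0 ⟨b.1, b.2⟩ := by apply Fin.ext; rfl
      rw [ha, hb]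
      exact hmono (show (⟨a.1, a.2⟩ : Fin k) < ⟨b.1, b.2⟩ from hab)
    have hπ : ⇑π = id := by
      have hr : Set.range ⇑π = Set.range (id : Fin (k+0) → Fin (k+0)) := by
        rw [Set.range_id, Set.range_eq_univ]
        exact π.surjective
      haveI hwf : WellFoundedLT (Fin (k+0)) := inferInstance
      exact (@StrictMono.range_inj (Fin (k+0)) (Fin (k+0)) _ _ hwf _ _ hsm strictMono_id).mp hr
    have : π = Equiv.refl _ := Equiv.ext fun x => congrFun hπ x
    simp [this]
  | succ s IH =>
    intro k π q hq hπq hmono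
    set K := k + s with hK
    have hqsdef : (q (Fin.last s) : Fin (K+1)) = q (Fin.last s) := rfl
    set qs : Fin (K + 1) := q (Fin.last s) with hqs
    set δ : Equiv.Perm (Fin (K + 1)) :=
      Fin.revPerm.trans ((Fin.cycleRange (Fin.rev qs)).trans Fin.revPerm) with hδ
    have hδ_apply : ∀ y : Fin (K+1), δ y = Fin.rev (Fin.cycleRange (Fin.rev qs) (Fin.rev y)) :=
      fun y => rfl
    have hδ1 : δ qs = Fin.last K := by
      rw [hδ_apply, Fin.cycleRange_of_eq rfl]
      apply Fin.ext
      simp [Fin.val_rev]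
    have hδ2 : ∀ y : Fin (K+1), y < qs → δ y = y := by
      intro y hy
      rw [hδ_apply, Fin.cycleRange_of_gt (by rwa [Fin.rev_lt_rev]), Fin.rev_rev]
    have hδ3 : ∀ y : Fin (K+1), qs < y → ((δ y : Fin (K+1)) : ℕ) = (y : ℕ) - 1 := by
      intro y hy
      rw [hδ_apply, Fin.val_rev, Fin.coe_cycleRange_of_lt (by rwa [Fin.rev_lt_rev]),
        Fin.val_rev]
      have h1 : (y : ℕ) ≤ K := Nat.lt_succ_iff.mp y.2
      have h2 : (qs : ℕ) < (y : ℕ) := hy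
      omega
    have hsignδ : Equiv.Perm.sign δ = (-1 : ℤˣ) ^ (K - (qs : ℕ)) := by
      have : δ = ((Fin.revPerm.symm).trans (Fin.cycleRange (Fin.rev qs))).trans Fin.revPerm := by
        rw [Fin.revPerm_symm, hδ, Equiv.trans_assoc]
      rw [this, Equiv.Perm.sign_symm_trans_trans, Fin.sign_cycleRange, Fin.val_rev]
      congr 1
      omega
    set π₁ : Equiv.Perm (Fin (K + 1)) := π.trans δ with hπ₁
    have hlastidx : (Fin.natAdd k (Fin.last s) : Fin (k + (s+1))) = Fin.last K := by
      apply Fin.ext; simp [hK]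
    have h₁last : π₁ (Fin.last K) = Fin.last K := by
      rw [← hlastidx]
      show δ (π (Fin.natAdd k (Fin.last s))) = Fin.last K
      rw [hπq, hδ1]
    have h₁ : ∀ x : Fin (K+1), x ≠ Fin.last K ↔ π₁ x ≠ Fin.last K := by
      intro x
      constructor
      · intro hx h
        exact hx (π₁.injective (h.trans h₁last.symm))
      · intro hx h
        exact hx (by rw [h, h₁last])
    have hsub := Equiv.Perm.sign_subtypePerm π₁ (p := fun x => x ≠ Fin.last K) (fun x => (h₁ x).symm) (fun x hx => by
      intro h; rw [h] at hx; exact hx h₁last)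
    set e0 : Fin K ≃ {x : Fin (K+1) // x ≠ Fin.last K} :=
      { toFun := fun x => ⟨x.castSucc, (Fin.castSucc_lt_last x).ne⟩
        invFun := fun y => y.1.castPred y.2
        left_inv := fun x => by simp
        right_inv := fun y => by simp } with he0
    set π' : Equiv.Perm (Fin K) := Equiv.permCongr e0.symm (π₁.subtypePerm (fun x => (h₁ x).symm)) with hπ'
    have hsign' : Equiv.Perm.sign π' = Equiv.Perm.sign π₁ := by
      rw [hπ', Equiv.Perm.sign_permCongr, hsub]
    have hπ'_apply : ∀ x : Fin K, π' x = (π₁ x.castSucc).castPred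
        ((h₁ x.castSucc).mp (Fin.castSucc_lt_last x).ne) := by
      intro x
      rfl
    have hqlt : ∀ b : Fin s, (q (Fin.castSucc b) : Fin (K+1)) < qs := by
      intro b; exact hq (Fin.castSucc_lt_last b)
    have hqne : ∀ b : Fin s, (q (Fin.castSucc b) : Fin (K+1)) ≠ Fin.last K :=
      fun b => ne_of_lt (lt_of_lt_of_le (hqlt b) (Fin.le_last qs))
    set q' : Fin s → Fin K := fun b => Fin.castPred (q (Fin.castSucc b)) (hqne b) with hq'def
    have hq'val : ∀ b, (q' b : ℕ) = ((q (Fin.castSucc b) : Fin (K+1)) : ℕ) := fun b => rfl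
    have hq' : StrictMono q' := by
      intro a b hab
      have h := hq (show Fin.castSucc a < Fin.castSucc b from
        (Fin.castSucc_lt_castSucc_iff).mpr hab)
      rw [Fin.lt_def] at h ⊢
      simpa [hq'val] using h
    have hidx1 : ∀ b : Fin s,
        (Fin.castSucc (Fin.natAdd k b) : Fin (K+1)) = Fin.natAdd k (Fin.castSucc b) := by
      intro b; apply Fin.ext; simp
    have hπ'q : ∀ b : Fin s, π' (Fin.natAdd k b) = q' b := by
      intro b
      rw [hπ'_apply]
      apply Fin.ext
      rw [Fin.coe_castPred, hq'val, hidx1]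
      show ((δ (π (Fin.natAdd k (Fin.castSucc b))) : Fin (K+1)) : ℕ) = _
      rw [hπq, hδ2 _ (hqlt b)]
    have hidx2 : ∀ a : Fin k,
        (Fin.castSucc (Fin.castAdd s a) : Fin (K+1)) = Fin.castAdd (s+1) a := by
      intro a; apply Fin.ext; simp
    have hfne : ∀ a : Fin k, (π (Fin.castAdd (s+1) a) : Fin (K+1)) ≠ qs := by
      intro a h
      have h2 : Fin.castAdd (s+1) a = Fin.natAdd k (Fin.last s) := π.injective (by
        rw [hπq]; exact_mod_cast h)
      have h3 : (a : ℕ) = k + s := by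
        have := congrArg Fin.val h2
        simpa using this
      have := a.2
      omega
    have hδval : ∀ y : Fin (K+1), y ≠ qs →
        ((δ y : Fin (K+1)) : ℕ) = if (y : ℕ) < (qs : ℕ) then (y : ℕ) else (y : ℕ) - 1 := by
      intro y hy
      rcases lt_trichotomy y qs with h | h | h
      · rw [hδ2 _ h, if_pos (Fin.lt_def.mp h)]
      · exact absurd h hy
      · rw [hδ3 _ h, if_neg (by rw [Fin.lt_def] at h; omega)]
    have hmono' : StrictMono (fun a : Fin k => π' (Fin.castAdd s a)) := by
      intro a b hab
      show π' (Fin.castAdd s a) < π' (Fin.castAdd s b)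
      rw [hπ'_apply, hπ'_apply, Fin.lt_def, Fin.coe_castPred, Fin.coe_castPred, hidx2, hidx2]
      show ((δ (π (Fin.castAdd (s+1) a)) : Fin (K+1)) : ℕ)
        < ((δ (π (Fin.castAdd (s+1) b)) : Fin (K+1)) : ℕ)
      have h1 := hδval _ (hfne a)
      have h2 := hδval _ (hfne b)
      have h3 : ((π (Fin.castAdd (s+1) a) : Fin (K+1)) : ℕ)
          < ((π (Fin.castAdd (s+1) b) : Fin (K+1)) : ℕ) := hmono hab
      have h4 : ((π (Fin.castAdd (s+1) a) : Fin (K+1)) : ℕ) ≠ (qs : ℕ) :=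
        fun h => hfne a (Fin.ext h)
      have h5 : ((π (Fin.castAdd (s+1) b) : Fin (K+1)) : ℕ) ≠ (qs : ℕ) :=
        fun h => hfne b (Fin.ext h)
      split_ifs at h1 h2 <;> omega
    have hsgn := IH k π' q' hq' hπ'q hmono'
    have hsignπ : Equiv.Perm.sign π = Equiv.Perm.sign δ * Equiv.Perm.sign π₁ := by
      have h8 : π₁ = δ * (show Equiv.Perm (Fin (K+1)) from π) := rfl
      have h7 : Equiv.Perm.sign π₁
          = Equiv.Perm.sign δ * Equiv.Perm.sign (show Equiv.Perm (Fin (K+1)) from π) := by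
        rw [h8]; exact _root_.map_mul Equiv.Perm.sign δ _
      rw [h7, ← mul_assoc, Int.units_mul_self, one_mul]
    calc Equiv.Perm.sign π = Equiv.Perm.sign δ * Equiv.Perm.sign π₁ := hsignπ
      _ = (-1 : ℤˣ) ^ (K - (qs : ℕ)) * (-1) ^ (∑ b : Fin s, ((q' b : ℕ) + k + (b : ℕ))) := by
            rw [hsignδ, ← hsign', hsgn]
      _ = (-1) ^ ((K - (qs : ℕ)) + ∑ b : Fin s, ((q' b : ℕ) + k + (b : ℕ))) :=
            (pow_add _ _ _).symm
      _ = (-1) ^ (∑ b : Fin (s+1), ((q b : ℕ) + k + (b : ℕ))) := by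
            rw [Fin.sum_univ_castSucc]
            have hsum2 : (∑ b : Fin s, ((q' b : ℕ) + k + (b : ℕ)))
                = ∑ b : Fin s, (((q (Fin.castSucc b) : Fin (K+1)) : ℕ) + k
                    + ((Fin.castSucc b : Fin (s+1)) : ℕ)) := by
              refine Finset.sum_congr rfl fun b _ => ?_
              rw [hq'val, Fin.coe_castSucc]
            rw [hsum2]
            apply neg_one_pow_congr_mod
            have hqsle : (qs : ℕ) ≤ K := Nat.lt_succ_iff.mp qs.2
            have hv2 : ((q (Fin.last s) : Fin (K+1)) : ℕ) = (qs : ℕ) := rfl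
            rw [hv2, Fin.val_last]
            omega

theorem det_indicator_rows {R : Type*} [CommRing R] {k s : ℕ}
    (W : Matrix (Fin (k + s)) (Fin (k + s)) R)
    (q : Fin s → Fin (k + s)) (hq : StrictMono q)
    (fc : Fin k → Fin (k + s)) (hfc : StrictMono fc)
    (hdisj : ∀ a b, fc a ≠ q b)
    (hrow : ∀ (b : Fin s) (j : Fin (k + s)), W (Fin.natAdd k b) j = if j = q b then 1 else 0) :
    W.det = (-1 : R) ^ (∑ b : Fin s, ((q b : ℕ) + k + (b : ℕ)))
      * (W.submatrix (Fin.castAdd s) fc).det := by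
  classical
  have hinj : Function.Injective (Sum.elim fc q) := by
    intro x y h
    cases x with
    | inl a => cases y with
      | inl a' => simp only [Sum.elim_inl] at h; rw [hfc.injective h]
      | inr b => exact absurd h (hdisj a b)
    | inr b => cases y with
      | inl a' => exact absurd h.symm (hdisj a' b)
      | inr b' => simp only [Sum.elim_inr] at h; rw [hq.injective h]
  have hbij : Function.Bijective (Sum.elim fc q) := by
    rw [Fintype.bijective_iff_injective_and_card]
    exact ⟨hinj, by simp⟩
  set e : (Fin k ⊕ Fin s) ≃ Fin (k + s) := Equiv.ofBijective _ hbij with he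
  set π : Equiv.Perm (Fin (k + s)) := finSumFinEquiv.symm.trans e with hπ
  have hπ_natAdd : ∀ b : Fin s, π (Fin.natAdd k b) = q b := by
    intro b
    show e (finSumFinEquiv.symm (Fin.natAdd k b)) = q b
    rw [finSumFinEquiv_symm_apply_natAdd]
    rfl
  have hπ_castAdd : ∀ a : Fin k, π (Fin.castAdd s a) = fc a := by
    intro a
    show e (finSumFinEquiv.symm (Fin.castAdd s a)) = fc a
    rw [finSumFinEquiv_symm_apply_castAdd]
    rfl
  have hsgn := sign_shuffle s k π q hq hπ_natAdd (by
    have hfe : (fun a : Fin k => π (Fin.castAdd s a)) = fc := funext hπ_castAdd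
    rw [hfe]; exact hfc)
  have hdet1 : (W.submatrix id ⇑π).det = (((Equiv.Perm.sign π : ℤ) : R)) * W.det :=
    det_permute' π W
  have hblock : (W.submatrix id ⇑π).submatrix ⇑finSumFinEquiv ⇑finSumFinEquiv
      = Matrix.fromBlocks (W.submatrix (Fin.castAdd s) fc)
          (Matrix.of fun a b => W (Fin.castAdd s a) (q b)) 0 1 := by
    ext i j
    cases i with
    | inl a =>
      cases j with
      | inl a' =>
        simp only [submatrix_apply, id_eq, finSumFinEquiv_apply_left, hπ_castAdd,
          fromBlocks_apply₁₁]
      | inr b =>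
        simp only [submatrix_apply, id_eq, finSumFinEquiv_apply_left,
          finSumFinEquiv_apply_right, hπ_natAdd, fromBlocks_apply₁₂, Matrix.of_apply]
    | inr b =>
      cases j with
      | inl a' =>
        simp only [submatrix_apply, id_eq, finSumFinEquiv_apply_left,
          finSumFinEquiv_apply_right, hπ_castAdd, fromBlocks_apply₂₁, Matrix.zero_apply]
        rw [hrow, if_neg (hdisj a' b)]
      | inr b' =>
        simp only [submatrix_apply, id_eq, finSumFinEquiv_apply_right, hπ_natAdd,
          fromBlocks_apply₂₂]
        rw [hrow]
        by_cases hbb : b' = b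
        · subst hbb; rw [if_pos rfl, Matrix.one_apply_eq]
        · rw [if_neg (fun h => hbb (hq.injective h)),
            Matrix.one_apply_ne (fun h => hbb h.symm)]
  have hdet2 : (W.submatrix id ⇑π).det = (W.submatrix (Fin.castAdd s) fc).det := by
    rw [← Matrix.det_submatrix_equiv_self finSumFinEquiv (W.submatrix id ⇑π), hblock,
      Matrix.det_fromBlocks_zero₂₁, Matrix.det_one, mul_one]
  have hunit : (((Equiv.Perm.sign π : ℤ) : R)) * (((Equiv.Perm.sign π : ℤ) : R)) = 1 := by
    rcases Int.units_eq_one_or (Equiv.Perm.sign π) with h | h <;> rw [h] <;> norm_num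
  have hcast : (((Equiv.Perm.sign π : ℤ) : R))
      = (-1 : R) ^ (∑ b : Fin s, ((q b : ℕ) + k + (b : ℕ))) := by
    rw [hsgn]
    push_cast
    norm_num
  calc W.det = ((((Equiv.Perm.sign π : ℤ) : R)) * (((Equiv.Perm.sign π : ℤ) : R))) * W.det := by
        rw [hunit, one_mul]
    _ = (((Equiv.Perm.sign π : ℤ) : R)) * (W.submatrix id ⇑π).det := by rw [hdet1]; ring
    _ = (((Equiv.Perm.sign π : ℤ) : R)) * (W.submatrix (Fin.castAdd s) fc).det := by rw [hdet2]
    _ = _ := by rw [hcast]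

section Helpers
theorem pair_sum_mod (u : ℕ) : ∀ (a : ℕ → ℕ), (∀ t, t < u → a (2*t+1) = a (2*t) + 1) →
    (∑ i ∈ Finset.range (2*u), a i) % 2 = u % 2 := by
  induction u with
  | zero => simp
  | succ u IH =>
    intro a h
    have h1 : ∑ i ∈ Finset.range (2*(u+1)), a i
        = ∑ i ∈ Finset.range (2*u), a i + a (2*u) + a (2*u+1) := by
      have h0 : 2*(u+1) = (2*u)+1+1 := by ring
      rw [h0, Finset.sum_range_succ, Finset.sum_range_succ]
    have h2 := IH a (fun t ht => h t (by omega))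
    have h3 := h u (by omega)
    omega
end Helpers



/-- Twistor coordinate. -/
noncomputable def twistor {k m n : ℕ} (Z : Matrix (Fin n) (Fin (k + m)) ℝ)
    (Y : Matrix (Fin k) (Fin (k + m)) ℝ) (L : Fin m → Fin n) : ℝ :=
  Matrix.det (Matrix.of fun i j : Fin k ⊕ Fin m =>
    Sum.elim (fun a => Y a) (fun b => Z (L b)) i (finSumFinEquiv j))

def PosMaximalMinors {n p : ℕ} (Z : Matrix (Fin n) (Fin p) ℝ) : Prop :=
  ∀ f : Fin p → Fin n, StrictMono f → 0 < Matrix.det (Matrix.of fun a b => Z (f a) b)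

def PosRowMinors {k n : ℕ} (C : Matrix (Fin k) (Fin n) ℝ) : Prop :=
  ∀ g : Fin k → Fin n, StrictMono g → 0 < Matrix.det (Matrix.of fun a b => C a (g b))

def ConsecPairs {m n : ℕ} (I : Fin m → Fin n) : Prop :=
  ∀ a b : Fin m, (a : ℕ) + 1 = (b : ℕ) → (a : ℕ) % 2 = 0 → (I b : ℕ) = (I a : ℕ) + 1

set_option maxHeartbeats 2000000 in
/-- Strict coarse boundary condition, even case with wrap-around: for a strictly increasing
pair list `I` of length `m` (paper's `m − 2`) with entries in `[2, n−1]` (1-indexed; in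
0-indexed `Fin n` terms, values in `[1, n−2]`), one has `(−1)^{k+1} ⟨Y, I, n, 1⟩ > 0`,
where `Y = C Z`. The paper's even `m` is `m + 2` here. -/
theorem stmt8 (k m n : ℕ) (hm : Even m) (hmn : k + (m + 2) ≤ n)
    (Z : Matrix (Fin n) (Fin (k + (m + 2))) ℝ) (hZ : PosMaximalMinors Z)
    (C : Matrix (Fin k) (Fin n) ℝ) (hC : PosRowMinors C)
    (L : Fin m → Fin n) (hL : StrictMono L) (hpair : ConsecPairs L)
    (hrange : ∀ j, 1 ≤ (L j : ℕ) ∧ (L j : ℕ) ≤ n - 2) :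
    0 < (-1 : ℝ) ^ (k + 1) *
      twistor Z (C * Z)
        (Fin.snoc (Fin.snoc L (⟨n - 1, by omega⟩ : Fin n)) (⟨0, by omega⟩ : Fin n)) := by
  classical
  obtain ⟨u, hu⟩ := hm
  have hn2 : 2 ≤ n := by omega
  set zlast : Fin n := ⟨n - 1, by omega⟩ with hzlast
  set zzero : Fin n := ⟨0, by omega⟩ with hzzero
  set W0 : Fin (m+1) → Fin n := Fin.snoc L zlast with hW0
  set S : Fin (m+2) → Fin n := Fin.cons zzero W0 with hS
  -- basic val facts
  have hW0c : ∀ c : Fin m, W0 (Fin.castSucc c) = L c := fun c => by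
    rw [hW0, Fin.snoc_castSucc]
  have hW0l : W0 (Fin.last m) = zlast := by rw [hW0, Fin.snoc_last]
  have hzl : (zlast : ℕ) = n - 1 := by rw [hzlast]
  have hzz : (zzero : ℕ) = 0 := by rw [hzzero]
  have hW0lb : ∀ x : Fin (m+1), 1 ≤ (W0 x : ℕ) := by
    intro x
    rcases Fin.eq_castSucc_or_eq_last x with ⟨c, rfl⟩ | rfl
    · rw [hW0c]; exact (hrange c).1
    · rw [hW0l, hzl]; omega
  have hW0ub : ∀ c : Fin m, (W0 (Fin.castSucc c) : ℕ) ≤ n - 2 := by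
    intro c; rw [hW0c]; exact (hrange c).2
  have hW0sm : StrictMono W0 := by
    intro x y hxy
    rcases Fin.eq_castSucc_or_eq_last y with ⟨c, rfl⟩ | rfl
    · rcases Fin.eq_castSucc_or_eq_last x with ⟨c', rfl⟩ | rfl
      · rw [hW0c c', hW0c c]
        exact hL (by rwa [Fin.castSucc_lt_castSucc_iff] at hxy)
      · exfalso
        have h1 := Fin.lt_def.mp hxy
        simp only [Fin.val_last, Fin.coe_castSucc] at h1
        have := c.2
        omega
    · rcases Fin.eq_castSucc_or_eq_last x with ⟨c', rfl⟩ | rfl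
      · rw [Fin.lt_def, hW0c c', hW0l, hzl]
        have h1 := (hrange c').2
        omega
      · exact absurd hxy (lt_irrefl _)
  have hS0 : S 0 = zzero := by rw [hS, Fin.cons_zero]
  have hSsucc : ∀ x : Fin (m+1), S (Fin.succ x) = W0 x := fun x => by
    rw [hS, Fin.cons_succ]
  have hSsm : StrictMono S := by
    intro x y hxy
    rcases Fin.eq_zero_or_eq_succ y with rfl | ⟨y', rfl⟩
    · exfalso
      have h1 := Fin.lt_def.mp hxy
      simp at h1
    · rcases Fin.eq_zero_or_eq_succ x with rfl | ⟨x', rfl⟩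
      · rw [Fin.lt_def, hS0, hSsucc, hzz]
        have h1 := hW0lb y'
        omega
      · rw [hSsucc, hSsucc]
        exact hW0sm (by rwa [Fin.succ_lt_succ_iff] at hxy)
  set L' : Fin (m+2) → Fin n := Fin.snoc W0 zzero with hL'
  have hrot : ∀ b : Fin (m+2), L' b = S (finRotate (m+2) b) := by
    intro b
    rcases Fin.eq_castSucc_or_eq_last b with ⟨x, rfl⟩ | rfl
    · rw [hL', Fin.snoc_castSucc]
      have h1 : finRotate (m+2) (Fin.castSucc x) = Fin.succ x := by
        rw [finRotate_succ_apply, Fin.coeSucc_eq_succ]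
      rw [h1, hSsucc]
    · rw [hL', Fin.snoc_last]
      have h1 : finRotate (m+2) (Fin.last (m+1)) = 0 := by
        rw [finRotate_succ_apply, Fin.last_add_one]
      rw [h1, hS0]
  -- matrices
  set A : (Fin (m+2) → Fin n) → Matrix (Fin (k+(m+2))) (Fin n) ℝ := fun V =>
    Matrix.of fun r l => Sum.elim (fun a => C a l)
      (fun b => if l = V b then (1:ℝ) else 0) (finSumFinEquiv.symm r) with hA
  set N : (Fin (m+2) → Fin n) → Matrix (Fin (k+(m+2))) (Fin (k+(m+2))) ℝ := fun V =>
    Matrix.of fun r c => Sum.elim (fun a => (C * Z) a c)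
      (fun b => Z (V b) c) (finSumFinEquiv.symm r) with hN
  have htw : ∀ V : Fin (m+2) → Fin n, twistor Z (C * Z) V = (N V).det := by
    intro V
    have hsub : (Matrix.of fun i j : Fin k ⊕ Fin (m+2) =>
        Sum.elim (fun a => (C * Z) a) (fun b => Z (V b)) i (finSumFinEquiv j))
        = (N V).submatrix ⇑finSumFinEquiv ⇑finSumFinEquiv := by
      ext i j
      cases i with
      | inl a => simp [hN]
      | inr b => simp [hN]
    unfold twistor
    rw [hsub, Matrix.det_submatrix_equiv_self]
  have hNA : ∀ V : Fin (m+2) → Fin n, N V = A V * Z := by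
    intro V
    ext r c
    rw [Matrix.mul_apply]
    show Sum.elim _ _ (finSumFinEquiv.symm r) = _
    cases h : finSumFinEquiv.symm r with
    | inl a =>
      simp only [Sum.elim_inl, hA, Matrix.of_apply, h]
      rw [Matrix.mul_apply]
    | inr b =>
      simp only [Sum.elim_inr, hA, Matrix.of_apply, h, Sum.elim_inr, ite_mul, one_mul, zero_mul]
      rw [Finset.sum_ite_eq' Finset.univ (V b) (fun l => Z l c)]
      simp
  -- rotation determinant
  set ρ : Equiv.Perm (Fin (k+(m+2))) := finSumFinEquiv.symm.trans
      ((Equiv.sumCongr (Equiv.refl (Fin k)) (finRotate (m+2))).trans finSumFinEquiv) with hρ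
  have hNL' : N L' = (N S).submatrix ⇑ρ id := by
    ext r c
    show Sum.elim _ _ (finSumFinEquiv.symm r) = N S (ρ r) c
    have hρr : finSumFinEquiv.symm (ρ r)
        = (Equiv.sumCongr (Equiv.refl (Fin k)) (finRotate (m+2))) (finSumFinEquiv.symm r) := by
      rw [hρ]; simp
    show _ = Sum.elim _ _ (finSumFinEquiv.symm (ρ r))
    rw [hρr]
    cases h : finSumFinEquiv.symm r with
    | inl a => simp
    | inr b => simp [hrot b]
  have hdetrot : (N L').det = (-1:ℝ)^(m+1) * (N S).det := by
    rw [hNL', det_permute]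
    congr 1
    have hsρ : Equiv.Perm.sign ρ = (-1:ℤˣ)^(m+1) := by
      have hassoc : ρ = (finSumFinEquiv.symm.trans
          (Equiv.sumCongr (Equiv.refl (Fin k)) (finRotate (m+2)))).trans finSumFinEquiv := by
        rw [hρ, Equiv.trans_assoc]
      rw [hassoc, Equiv.Perm.sign_symm_trans_trans, Equiv.Perm.sign_sumCongr,
        Equiv.Perm.sign_refl, one_mul, sign_finRotate]
      rw [show m + 2 - 1 = m + 1 by omega]
    rw [hsρ]
    push_cast
    norm_num
  -- good minors
  have hmain : ∀ g : Fin (k+(m+2)) → Fin n, StrictMono g → (∀ b, ∃ j, g j = S b) →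
      0 < (-1:ℝ)^k * ((A S).submatrix id g).det := by
    intro g hg hcov
    choose jf hjf using hcov
    have hjmono : StrictMono jf := by
      intro a b hab
      have h1 : g (jf a) < g (jf b) := by rw [hjf, hjf]; exact hSsm hab
      exact (hg.lt_iff_lt).mp h1
    set T : Finset (Fin (k+(m+2))) := Finset.univ \ Finset.image jf Finset.univ with hT
    have hTcard : T.card = k := by
      rw [hT, Finset.card_sdiff_of_subset (Finset.subset_univ _),
        Finset.card_image_of_injective _ hjmono.injective]
      simp
    set fc : Fin k → Fin (k+(m+2)) := fun a => T.orderEmbOfFin hTcard a with hfc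
    have hfcsm : StrictMono fc := (T.orderEmbOfFin hTcard).strictMono
    have hdisj : ∀ a b, fc a ≠ jf b := by
      intro a b h
      have h1 : fc a ∈ T := Finset.orderEmbOfFin_mem T hTcard a
      rw [hT, Finset.mem_sdiff] at h1
      exact h1.2 (h ▸ Finset.mem_image_of_mem jf (Finset.mem_univ b))
    set W : Matrix (Fin (k+(m+2))) (Fin (k+(m+2))) ℝ := (A S).submatrix id g with hWdef
    have hrowW : ∀ (b : Fin (m+2)) (j : Fin (k+(m+2))),
        W (Fin.natAdd k b) j = if j = jf b then 1 else 0 := by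
      intro b j
      show Sum.elim _ _ (finSumFinEquiv.symm (Fin.natAdd k b)) = _
      rw [finSumFinEquiv_symm_apply_natAdd]
      show (if g j = S b then (1:ℝ) else 0) = _
      have hiff : (g j = S b) ↔ (j = jf b) := by
        rw [← hjf b]
        exact ⟨fun h => hg.injective h, fun h => by rw [h]⟩
      rw [if_congr hiff rfl rfl]
    have hdet := det_indicator_rows W jf hjmono fc hfcsm hdisj hrowW
    have hCpos : 0 < (W.submatrix (Fin.castAdd (m+2)) fc).det := by
      have hsubC : W.submatrix (Fin.castAdd (m+2)) fc
          = Matrix.of (fun a b => C a (g (fc b))) := by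
        ext a b
        show Sum.elim _ _ (finSumFinEquiv.symm (Fin.castAdd (m+2) a)) = _
        rw [finSumFinEquiv_symm_apply_castAdd]
        rfl
      rw [hsubC]
      exact hC (fun b => g (fc b)) (hg.comp hfcsm)
    -- position facts
    have hj0 : (jf 0 : ℕ) = 0 := by
      set zeroK : Fin (k+(m+2)) := ⟨0, by omega⟩ with hzeroK
      have h1 : (g (jf 0) : ℕ) = 0 := by rw [hjf 0, hS0, hzz]
      have h2 : (g zeroK : ℕ) ≤ (g (jf 0) : ℕ) := hg.monotone (by
        rw [Fin.le_def, hzeroK]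
        exact Nat.zero_le _)
      have h3 : g zeroK = g (jf 0) := Fin.ext (by omega)
      have h4 := hg.injective h3
      rw [← h4, hzeroK]
    have hjlastv : (jf (Fin.last (m+1)) : ℕ) = k + m + 1 := by
      have hSl : (S (Fin.last (m+1)) : ℕ) = n - 1 := by
        have h9 : Fin.last (m+1) = Fin.succ (Fin.last m) := rfl
        rw [h9, hSsucc, hW0l, hzl]
      have h1 : (g (jf (Fin.last (m+1))) : ℕ) = n - 1 := by rw [hjf]; exact hSl
      set lastK : Fin (k+(m+2)) := ⟨k+m+1, by omega⟩ with hlastK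
      have h2 : (g (jf (Fin.last (m+1))) : ℕ) ≤ (g lastK : ℕ) := by
        apply hg.monotone
        rw [Fin.le_def]
        have := (jf (Fin.last (m+1))).2
        show _ ≤ k+m+1
        omega
      have h3 : (g lastK : ℕ) ≤ n - 1 := by have := (g lastK).2; omega
      have h4 : g (jf (Fin.last (m+1))) = g lastK := Fin.ext (by omega)
      have h5 := hg.injective h4
      rw [h5]
    have hmidx : ∀ (i : ℕ) (h : i < m), S ⟨i+1, by omega⟩ = L ⟨i, h⟩ := by
      intro i h
      have h9 : (⟨i+1, by omega⟩ : Fin (m+2)) = Fin.succ (Fin.castSucc ⟨i, h⟩) := by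
        apply Fin.ext; simp
      rw [h9, hSsucc, hW0c]
    have hpairpos : ∀ (b1 b2 : Fin (m+2)) (t : ℕ), t < u →
        (b1 : ℕ) = 2*t+1 → (b2 : ℕ) = 2*t+2 → (jf b2 : ℕ) = (jf b1 : ℕ) + 1 := by
      intro b1 b2 t ht hB1 hB2
      have ht2 : 2*t < m := by omega
      have ht3 : 2*t+1 < m := by omega
      have hLp : (L ⟨2*t+1, ht3⟩ : ℕ) = (L ⟨2*t, ht2⟩ : ℕ) + 1 :=
        hpair ⟨2*t, ht2⟩ ⟨2*t+1, ht3⟩ (by simp) (by simp [Nat.mul_mod_right])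
      have hv1 : (g (jf b1) : ℕ) = (L ⟨2*t, ht2⟩ : ℕ) := by
        rw [hjf]
        have h8 : b1 = (⟨2*t+1, by omega⟩ : Fin (m+2)) := by apply Fin.ext; rw [hB1]
        rw [h8, hmidx (2*t) ht2]
      have hv2 : (g (jf b2) : ℕ) = (L ⟨2*t+1, ht3⟩ : ℕ) := by
        rw [hjf]
        have h8 : b2 = (⟨(2*t+1)+1, by omega⟩ : Fin (m+2)) := by apply Fin.ext; rw [hB2]
        rw [h8, hmidx (2*t+1) ht3]
      have hlt : jf b1 < jf b2 := hjmono (by rw [Fin.lt_def, hB1, hB2]; omega)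
      by_contra hne
      have h7 : (jf b1 : ℕ) + 1 < (jf b2 : ℕ) := by
        have := Fin.lt_def.mp hlt
        omega
      set w : Fin (k+(m+2)) := ⟨(jf b1 : ℕ) + 1, by have := (jf b2).2; omega⟩ with hw
      have h8 : g (jf b1) < g w := hg (by rw [Fin.lt_def, hw]; exact Nat.lt_succ_self _)
      have h9 : g w < g (jf b2) := hg (by rw [Fin.lt_def, hw]; exact h7)  -- may adjust
      rw [Fin.lt_def] at h8 h9
      omega
    -- parity
    have hEpar : (∑ b : Fin (m+2), ((jf b : ℕ) + k + (b : ℕ))) % 2 = k % 2 := by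
      set J : ℕ → ℕ := fun i => if h : i < m+2 then (jf ⟨i, h⟩ : ℕ) else 0 with hJ
      have hJb : ∀ b : Fin (m+2), J (b : ℕ) = (jf b : ℕ) := by
        intro b
        rw [hJ]
        simp only [Fin.eta, b.isLt, dif_pos]
      have hsum1 : (∑ b : Fin (m+2), ((jf b : ℕ) + k + (b : ℕ)))
          = ∑ i ∈ Finset.range (m+2), (J i + k + i) := by
        rw [← Fin.sum_univ_eq_sum_range (fun i => J i + k + i) (m+2)]
        exact Finset.sum_congr rfl fun b _ => by rw [hJb]
      have hsplit : ∑ i ∈ Finset.range (m+2), (J i + k + i)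
          = (∑ i ∈ Finset.range (m+2), J i) + ((m+2)*k + (∑ i ∈ Finset.range (m+2), i)) := by
        rw [Finset.sum_add_distrib, Finset.sum_add_distrib, Finset.sum_const,
          Finset.card_range, smul_eq_mul]
        try ring
        try omega
      have hJsplit : ∑ i ∈ Finset.range (m+2), J i
          = (∑ i ∈ Finset.range m, J (i+1)) + J 0 + J (m+1) := by
        rw [Finset.sum_range_succ, Finset.sum_range_succ']
        try ring
        try omega
      have hJ0v : J 0 = 0 := by
        rw [hJ]
        simp only [dif_pos (by omega : (0:ℕ) < m+2)]
        exact hj0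
      have hJlv : J (m+1) = k + m + 1 := by
        rw [hJ]
        simp only [dif_pos (by omega : m+1 < m+2)]
        exact hjlastv
      have hP : (∑ i ∈ Finset.range m, J (i+1)) % 2 = u % 2 := by
        rw [show m = 2*u from by omega]
        refine pair_sum_mod u (fun i => J (i+1)) ?_
        intro t ht
        show J (2*t+1+1) = J (2*t+1) + 1
        rw [hJ]
        simp only [dif_pos (by omega : 2*t+1+1 < m+2), dif_pos (by omega : 2*t+1 < m+2)]
        exact hpairpos ⟨2*t+1, by omega⟩ ⟨2*t+1+1, by omega⟩ t ht rfl (by simp)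
      have hGauss : (∑ i ∈ Finset.range (m+2), i) * 2 = (m+2)*(m+1) := by
        rw [Finset.sum_range_id_mul_two (m+2)]
        congr 1
      have hG2 : (∑ i ∈ Finset.range (m+2), i) * 2 = ((u+1)*(2*u+1))*2 := by
        rw [hGauss, show m = u + u from hu]
        ring
      have hP1 : ((u+1)*(2*u+1)) % 2 = (u+1) % 2 := by
        rw [Nat.mul_mod, show (2*u+1)%2 = 1 from by omega, mul_one]
        omega
      have hprodeven : (m+2)*k = 2*((u+1)*k) := by
        rw [show m = u + u from hu]; ring
      omega
    have hsign : ((-1:ℝ)) ^ (∑ b : Fin (m+2), ((jf b : ℕ) + k + (b : ℕ))) = (-1)^k :=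
      neg_one_pow_congr_mod hEpar
    rw [hdet, hsign, ← mul_assoc, ← pow_add]
    rw [show ((-1:ℝ))^(k+k) = 1 from Even.neg_one_pow ⟨k, rfl⟩, one_mul]
    exact hCpos
  -- bad minors vanish
  have hbad : ∀ g : Fin (k+(m+2)) → Fin n, (¬ ∀ b, ∃ j, g j = S b) →
      ((A S).submatrix id g).det = 0 := by
    intro g hcov
    push_neg at hcov
    obtain ⟨b, hb⟩ := hcov
    apply Matrix.det_eq_zero_of_row_eq_zero (Fin.natAdd k b)
    intro j
    show Sum.elim _ _ (finSumFinEquiv.symm (Fin.natAdd k b)) = 0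
    rw [finSumFinEquiv_symm_apply_natAdd]
    exact if_neg (hb j)
  -- existence of a good strictly monotone selection
  obtain ⟨t, hst, htc⟩ := Finset.exists_superset_card_eq
      (s := Finset.image S Finset.univ) (n := k+(m+2))
      (by rw [Finset.card_image_of_injective _ hSsm.injective, Finset.card_univ]; simp)
      (by simpa using hmn)
  set g₀ : Fin (k+(m+2)) → Fin n := fun j => t.orderEmbOfFin htc j with hg₀
  have hg₀sm : StrictMono g₀ := (t.orderEmbOfFin htc).strictMono
  have hg₀cov : ∀ b, ∃ j, g₀ j = S b := by
    intro b
    have h1 : S b ∈ t := hst (Finset.mem_image_of_mem S (Finset.mem_univ b))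
    have h2 : (S b : Fin n) ∈ Set.range ⇑(t.orderEmbOfFin htc) := by
      rw [Finset.range_orderEmbOfFin]
      exact_mod_cast h1
    obtain ⟨j, hj⟩ := h2
    exact ⟨j, hj⟩
  have hZpos : ∀ g : Fin (k+(m+2)) → Fin n, StrictMono g → 0 < (Z.submatrix g id).det :=
    fun g hgsm => hZ g hgsm
  have hpos : 0 < (-1:ℝ)^k * (A S * Z).det := by
    rw [cauchyBinet, Finset.mul_sum]
    apply Finset.sum_pos'
    · intro g hg
      have hgsm : StrictMono g := (Finset.mem_filter.mp hg).2
      by_cases hcov : ∀ b, ∃ j, g j = S b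
      · have h1 := hmain g hgsm hcov
        have h2 := hZpos g hgsm
        have h3 : (0:ℝ) < (-1:ℝ)^k * (((A S).submatrix id g).det * (Z.submatrix g id).det) := by
          rw [← mul_assoc]
          exact mul_pos h1 h2
        exact le_of_lt h3
      · rw [hbad g hcov]
        simp
    · refine ⟨g₀, Finset.mem_filter.mpr ⟨Finset.mem_univ _, hg₀sm⟩, ?_⟩
      have h1 := hmain g₀ hg₀sm hg₀cov
      have h2 := hZpos g₀ hg₀sm
      rw [← mul_assoc]
      exact mul_pos h1 h2
  -- final chain
  show 0 < (-1:ℝ)^(k+1) * twistor Z (C*Z) L'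
  rw [htw L', hdetrot, hNA S]
  have hfinal : (-1:ℝ)^(k+1) * ((-1:ℝ)^(m+1) * (A S * Z).det) = (-1:ℝ)^k * (A S * Z).det := by
    rw [← mul_assoc, ← pow_add]
    congr 1
    exact neg_one_pow_congr_mod (by omega)
  rw [hfinal]
  exact hpos
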